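/- Let gᵢ ≠ gⱼ be complex numbers, let W := (gⱼ − gᵢ)⁻¹ • (1 − gᵢgⱼ, √(−1)(1 + gᵢgⱼ), gᵢ + gⱼ) ∈ ℂ³, and let v ∈ ℝ³ be the componentwise imaginary part of W. Then ‖v‖² · (1 − ⟨n(gᵢ), n(gⱼ)⟩) + ⟨n(gᵢ) × n(gⱼ), v⟩ = 0, where n(z) := (1 + |z|²)⁻¹ • (2 Re z, 2 Im z, |z|² − 1) ∈ ℝ³ is the inverse stereographic projection of z ∈ ℂ and × denotes the cross product in ℝ³. -/

import Mathlib

open scoped RealInnerProductSpace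

/-- The vector `(x, y, z)` in Euclidean 3-space. -/
noncomputable def e3 (x y z : ℝ) : EuclideanSpace ℝ (Fin 3) :=
  (WithLp.equiv 2 _).symm ![x, y, z]

/-- The cross product in Euclidean 3-space. -/
noncomputable def cross3 (a b : EuclideanSpace ℝ (Fin 3)) : EuclideanSpace ℝ (Fin 3) :=
  e3 (a 1 * b 2 - a 2 * b 1) (a 2 * b 0 - a 0 * b 2) (a 0 * b 1 - a 1 * b 0)

/-- Inverse stereographic projection `n(z) = (1 + |z|²)⁻¹ (2 Re z, 2 Im z, |z|² - 1)`. -/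
noncomputable def invStereo (z : ℂ) : EuclideanSpace ℝ (Fin 3) :=
  (1 + ‖z‖ ^ 2)⁻¹ • e3 (2 * z.re) (2 * z.im) (‖z‖ ^ 2 - 1)

/-- The Weierstrass edge vector `W = (gⱼ - gᵢ)⁻¹ • (1 - gᵢgⱼ, √(-1)(1 + gᵢgⱼ), gᵢ + gⱼ) ∈ ℂ³`. -/
noncomputable def wVec (gi gj : ℂ) : Fin 3 → ℂ :=
  (gj - gi)⁻¹ • ![1 - gi * gj, Complex.I * (1 + gi * gj), gi + gj]

/-- Componentwise imaginary part of a vector in ℂ³, as a vector in ℝ³. -/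
noncomputable def imVec (W : Fin 3 → ℂ) : EuclideanSpace ℝ (Fin 3) :=
  e3 (W 0).im (W 1).im (W 2).im

/-- Componentwise real part of a vector in ℂ³, as a vector in ℝ³. -/
noncomputable def reVec (W : Fin 3 → ℂ) : EuclideanSpace ℝ (Fin 3) :=
  e3 (W 0).re (W 1).re (W 2).re



lemma inner_e3 (a b c d e f : ℝ) : ⟪e3 a b c, e3 d e f⟫ = a*d + b*e + c*f := by
  simp [e3, PiLp.inner_apply, Fin.sum_univ_three]
  ring

lemma e3_zero (x y z : ℝ) : e3 x y z 0 = x := rfl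
lemma e3_one (x y z : ℝ) : e3 x y z 1 = y := rfl
lemma e3_two (x y z : ℝ) : e3 x y z 2 = z := rfl

lemma smul_e3 (r x y z : ℝ) : r • e3 x y z = e3 (r*x) (r*y) (r*z) := by
  apply PiLp.ext
  intro i
  fin_cases i <;> simp [e3]

lemma cross3_e3 (x y z u v w : ℝ) :
    cross3 (e3 x y z) (e3 u v w) = e3 (y*w - z*v) (z*u - x*w) (x*v - y*u) := by
  simp [cross3, e3_zero, e3_one, e3_two]

set_option maxHeartbeats 4000000 in
/-- For `v = Im W` the identity `‖v‖² (1 − ⟨n(gᵢ), n(gⱼ)⟩) + ⟨n(gᵢ) × n(gⱼ), v⟩ = 0` holds. -/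
theorem stmt_3 (gi gj : ℂ) (hne : gi ≠ gj) :
    ‖imVec (wVec gi gj)‖ ^ 2 * (1 - ⟪invStereo gi, invStereo gj⟫) +
      ⟪cross3 (invStereo gi) (invStereo gj), imVec (wVec gi gj)⟫ = 0 := by
  have hd : Complex.normSq (gj - gi) ≠ 0 := by
    simp [Complex.normSq_eq_zero, sub_eq_zero]; exact fun h => hne h.symm
  have h1 : (1 : ℝ) + ‖gi‖ ^ 2 ≠ 0 := by positivity
  have h2 : (1 : ℝ) + ‖gj‖ ^ 2 ≠ 0 := by positivity
  rw [← real_inner_self_eq_norm_sq]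
  rw [Complex.sq_norm] at h1 h2
  simp only [imVec, wVec, invStereo, Complex.sq_norm, smul_e3, cross3_e3, inner_e3,
    Pi.smul_apply, Matrix.cons_val_zero, Matrix.cons_val_one, Matrix.head_cons,
    Matrix.cons_val_two, Matrix.tail_cons, smul_eq_mul, Complex.mul_im, Complex.inv_im,
    Complex.inv_re, Complex.sub_re, Complex.sub_im, Complex.mul_re, Complex.one_re,
    Complex.one_im, Complex.add_re, Complex.add_im, Complex.I_re, Complex.I_im,
    Complex.normSq_apply]
  have hd' : (gj.re - gi.re)*(gj.re - gi.re) + (gj.im - gi.im)*(gj.im - gi.im) ≠ 0 := by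
    simpa [Complex.normSq_apply, Complex.sub_re, Complex.sub_im] using hd
  have h1' : (1:ℝ) + (gi.re*gi.re + gi.im*gi.im) ≠ 0 := by
    simpa [Complex.normSq_apply] using h1
  have h2' : (1:ℝ) + (gj.re*gj.re + gj.im*gj.im) ≠ 0 := by
    simpa [Complex.normSq_apply] using h2
  field_simp [hd', h1', h2']
  ring
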